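/- arXiv:2007.14925 — 2 statements merged into one kernel-verified Lean document; each statement's English description precedes it below -/
import Mathlib

section
/- Sliceness criterion: a function f : Ω_D → ℍ is a slice function if and only if there exists I = (I₁,…,Iₙ) ∈ 𝕊ⁿ with the following property: f(x) = 2^{−n} ∑_{K,H∈𝒫(n)} (−1)^{|K∩H|} J_K ((I_K)^{−1} f(y^{c,H})) for every y = (α₁+I₁β₁,…,αₙ+Iₙβₙ) ∈ Ω_D and every x = (α₁+J₁β₁,…,αₙ+Jₙβₙ) ∈ Ω_D, where α₁,β₁,…,αₙ,βₙ ∈ ℝ and J = (J₁,…,Jₙ) ∈ 𝕊ⁿ. -/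
noncomputable section

abbrev ℍ := Quaternion ℝ

/-- The sphere of quaternionic imaginary units. -/
def Sph : Set ℍ := {J | J ^ 2 = -1}

/-- The complex slice `ℂ_J = {a + b J : a b : ℝ}`. -/
def CJ (J : ℍ) : Set ℍ := {x | ∃ a b : ℝ, x = (a : ℍ) + (b : ℍ) * J}

variable {n : ℕ}

/-- Conjugation of the `h`-th complex coordinate. -/
def conjCoord (h : Fin n) (z : Fin n → ℂ) : Fin n → ℂ :=
  Function.update z h (starRingEnd ℂ (z h))

/-- Quaternionic conjugation of the coordinates with index in `H`. -/
def conjQ (H : Finset (Fin n)) (x : Fin n → ℍ) : Fin n → ℍ :=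
  fun h => if h ∈ H then star (x h) else x h

/-- Ordered product `J_K` of the values of `J` over `K`, in increasing index order. -/
def JK (J : Fin n → ℍ) (K : Finset (Fin n)) : ℍ :=
  ((K.sort (· ≤ ·)).map J).prod

/-- The complex point with coordinates `α h + i β h`. -/
def zOf (α β : Fin n → ℝ) : Fin n → ℂ :=
  fun h => (α h : ℂ) + (β h : ℂ) * Complex.I

/-- The quaternionic point with coordinates `α h + β h * J h`. -/
def ptOf (α β : Fin n → ℝ) (J : Fin n → ℍ) : Fin n → ℍ :=
  fun h => (α h : ℍ) + (β h : ℍ) * J h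

/-- The circularization `Ω_D` of `D ⊆ ℂⁿ` in `ℍⁿ`. -/
def OmegaD (D : Set (Fin n → ℂ)) : Set (Fin n → ℍ) :=
  {x | ∃ α β : Fin n → ℝ, ∃ J : Fin n → ℍ,
    (∀ h, J h ∈ Sph) ∧ x = ptOf α β J ∧ zOf α β ∈ D}

/-- Invariance of `D` under all coordinatewise complex conjugations. -/
def ConjInv (D : Set (Fin n → ℂ)) : Prop :=
  ∀ h : Fin n, ∀ z ∈ D, conjCoord h z ∈ D

/-- Stem function condition for a family `F = (F_K)`. -/
def IsStem (D : Set (Fin n → ℂ)) (F : Finset (Fin n) → (Fin n → ℂ) → ℍ) : Prop :=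
  ∀ (K : Finset (Fin n)) (h : Fin n), ∀ z ∈ D,
    F K (conjCoord h z) = (if h ∈ K then -1 else 1) * F K z

/-- `f` is the slice function induced by the stem function `F` on `Ω_D`. -/
def Induces (D : Set (Fin n → ℂ)) (F : Finset (Fin n) → (Fin n → ℂ) → ℍ)
    (f : (Fin n → ℍ) → ℍ) : Prop :=
  ∀ (α β : Fin n → ℝ) (J : Fin n → ℍ), (∀ h, J h ∈ Sph) → zOf α β ∈ D →
    f (ptOf α β J) = ∑ K : Finset (Fin n), JK J K * F K (zOf α β)

/-- `f` is a slice function on `Ω_D`. -/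
def IsSlice (D : Set (Fin n → ℂ)) (f : (Fin n → ℍ) → ℍ) : Prop :=
  ∃ F, IsStem D F ∧ Induces D F f

/-- Each component of the stem function is of class `C¹` on `D`. -/
def StemC1 (D : Set (Fin n → ℂ)) (F : Finset (Fin n) → (Fin n → ℂ) → ℍ) : Prop :=
  ∀ K, ContDiffOn ℝ 1 (F K) D

/-- Holomorphy (Cauchy–Riemann system) of a stem function. -/
def StemHolo (D : Set (Fin n → ℂ)) (F : Finset (Fin n) → (Fin n → ℂ) → ℍ) : Prop :=
  ∀ z ∈ D, ∀ h : Fin n, ∀ K : Finset (Fin n), h ∉ K →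
    fderiv ℝ (F K) z (Pi.single h 1) =
      fderiv ℝ (F (insert h K)) z (Pi.single h Complex.I) ∧
    fderiv ℝ (F K) z (Pi.single h Complex.I) =
      -fderiv ℝ (F (insert h K)) z (Pi.single h 1)

/-- `f` is a slice regular function on `Ω_D`. -/
def IsSliceRegular (D : Set (Fin n → ℂ)) (f : (Fin n → ℍ) → ℍ) : Prop :=
  ∃ F, IsStem D F ∧ StemC1 D F ∧ StemHolo D F ∧ Induces D F f

/-- Pointwise product of stem functions associated with `σ`. -/
def SP (σ : Finset (Fin n) → Finset (Fin n) → ℝ)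
    (F G : Finset (Fin n) → (Fin n → ℂ) → ℍ) :
    Finset (Fin n) → (Fin n → ℂ) → ℍ :=
  fun K z => ∑ H : Finset (Fin n), ∑ L : Finset (Fin n),
    if symmDiff H L = K then σ H L • (F H z * G L z) else 0

/-- The tensor-product sign function `σ_⊗(K,H) = (-1)^{|K∩H|}`. -/
def sigmaT : Finset (Fin n) → Finset (Fin n) → ℝ :=
  fun K H => (-1 : ℝ) ^ (K ∩ H).card

/-- The tensor (slice) product of stem functions. -/
def SPT (F G : Finset (Fin n) → (Fin n → ℂ) → ℍ) :
    Finset (Fin n) → (Fin n → ℂ) → ℍ := SP sigmaT F G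

/-- The stem function `∂_h F`. -/
def Dplus (F : Finset (Fin n) → (Fin n → ℂ) → ℍ) (h : Fin n) :
    Finset (Fin n) → (Fin n → ℂ) → ℍ :=
  fun K z => (2 : ℝ)⁻¹ • (fderiv ℝ (F K) z (Pi.single h 1) +
    ((-1 : ℝ) ^ (K ∩ {h}).card) •
      fderiv ℝ (F (symmDiff K {h})) z (Pi.single h Complex.I))

/-- The stem function `∂̄_h F`. -/
def Dminus (F : Finset (Fin n) → (Fin n → ℂ) → ℍ) (h : Fin n) :
    Finset (Fin n) → (Fin n → ℂ) → ℍ :=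
  fun K z => (2 : ℝ)⁻¹ • (fderiv ℝ (F K) z (Pi.single h 1) -
    ((-1 : ℝ) ^ (K ∩ {h}).card) •
      fderiv ℝ (F (symmDiff K {h})) z (Pi.single h Complex.I))

/-- The ordered monomial function `x ↦ x^ℓ a = x₁^{ℓ₁} ⋯ xₙ^{ℓₙ} a`. -/
def mono (ℓ : Fin n → ℕ) (a : ℍ) (x : Fin n → ℍ) : ℍ :=
  (List.ofFn fun h => x h ^ ℓ h).prod * a

/-- The coordinatewise map `φ_J : ℂⁿ → (ℂ_J)ⁿ ⊆ ℍⁿ`. -/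
def phiJ (J : ℍ) (z : Fin n → ℂ) : Fin n → ℍ :=
  fun h => ((z h).re : ℍ) + ((z h).im : ℍ) * J

/-- The standard basis vector `e_K` of `ℝ^{𝒫(n)}`. -/
def eB (K : Finset (Fin n)) : Finset (Fin n) → ℝ := Pi.single K 1

/-- The `Δ`-product on `ℝ^{𝒫(n)}` associated with `σ`. -/
def deltaMulR (σ : Finset (Fin n) → Finset (Fin n) → ℝ)
    (v w : Finset (Fin n) → ℝ) : Finset (Fin n) → ℝ :=
  fun K => ∑ H : Finset (Fin n), ∑ L : Finset (Fin n),
    if symmDiff H L = K then σ H L * v H * w L else 0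

-- auxiliary definitions and lemmas
def negOn (H : Finset (Fin n)) (β : Fin n → ℝ) : Fin n → ℝ :=
  fun h => if h ∈ H then -β h else β h
def zConj (H : Finset (Fin n)) (z : Fin n → ℂ) : Fin n → ℂ :=
  fun h => if h ∈ H then starRingEnd ℂ (z h) else z h

lemma sph_re {J : ℍ} (hJ : J ∈ Sph) : J.re = 0 := by
  have h := hJ
  simp only [Sph, Set.mem_setOf_eq] at h
  have h1 : (J^2).re = (-1 : ℍ).re := by rw [h]
  have h2 : (J^2).imI = (-1 : ℍ).imI := by rw [h]
  have h3 : (J^2).imJ = (-1 : ℍ).imJ := by rw [h]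
  have h4 : (J^2).imK = (-1 : ℍ).imK := by rw [h]
  simp [pow_two, Quaternion.re_mul, Quaternion.imI_mul, Quaternion.imJ_mul, Quaternion.imK_mul, show (1:ℍ).re = 1 from rfl, show (1:ℍ).imI = 0 from rfl, show (1:ℍ).imJ = 0 from rfl, show (1:ℍ).imK = 0 from rfl] at h1 h2 h3 h4
  by_contra hre
  have hb : J.imI = 0 := by
    have h2' : J.re * J.imI = 0 := by nlinarith
    rcases mul_eq_zero.1 h2' with h'|h'
    · exact absurd h' hre
    · exact h'
  have hc : J.imJ = 0 := by
    have h3' : J.re * J.imJ = 0 := by nlinarith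
    rcases mul_eq_zero.1 h3' with h'|h'
    · exact absurd h' hre
    · exact h'
  have hd : J.imK = 0 := by
    have h4' : J.re * J.imK = 0 := by nlinarith
    rcases mul_eq_zero.1 h4' with h'|h'
    · exact absurd h' hre
    · exact h'
  rw [hb, hc, hd] at h1
  nlinarith

lemma sph_star {J : ℍ} (hJ : J ∈ Sph) : star J = -J := by
  have := sph_re hJ
  ext <;> simp [this]

lemma sph_ne_zero {J : ℍ} (hJ : J ∈ Sph) : J ≠ 0 := by
  intro h
  have : J ^ 2 = -1 := hJ
  rw [h] at this
  simp at this

lemma JK_ne_zero {J : Fin n → ℍ} (hJ : ∀ h, J h ∈ Sph) (K : Finset (Fin n)) :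
    JK J K ≠ 0 := by
  apply List.prod_ne_zero
  intro h
  obtain ⟨x, hx, hx0⟩ := List.mem_map.1 h
  exact sph_ne_zero (hJ x) hx0


lemma neg_one_pow_mod (a b : ℕ) (h : a % 2 = b % 2) : (-1:ℍ)^a = (-1)^b := by
  rcases Nat.even_or_odd a with ha|ha
  · have hb : Even b := by rw [Nat.even_iff] at *; omega
    rw [ha.neg_one_pow, hb.neg_one_pow]
  · have hb : Odd b := by rw [Nat.odd_iff] at *; omega
    rw [ha.neg_one_pow, hb.neg_one_pow]

lemma neg_one_pow_symmDiff (X Y : Finset (Fin n)) :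
    (-1 : ℍ) ^ (symmDiff X Y).card = (-1) ^ X.card * (-1) ^ Y.card := by
  have h1 : (symmDiff X Y).card = (X \ Y).card + (Y \ X).card := by
    rw [symmDiff_def, Finset.sup_eq_union]
    exact Finset.card_union_of_disjoint (disjoint_sdiff_sdiff)
  have h2 : (X \ Y).card + (X ∩ Y).card = X.card := Finset.card_sdiff_add_card_inter X Y
  have h3 : (Y \ X).card + (Y ∩ X).card = Y.card := Finset.card_sdiff_add_card_inter Y X
  have h4 : (Y ∩ X).card = (X ∩ Y).card := by rw [Finset.inter_comm]
  rw [← pow_add]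
  apply neg_one_pow_mod
  omega

lemma sum_symmDiff_reindex (E : Finset (Fin n)) (g : Finset (Fin n) → ℍ) :
    ∑ H : Finset (Fin n), g (symmDiff H E) = ∑ H : Finset (Fin n), g H :=
  Finset.sum_bijective (fun H => symmDiff H E)
    (Function.Involutive.bijective fun H => symmDiff_symmDiff_cancel_right E H)
    (by simp) (fun H _ => rfl)

lemma orth (A : Finset (Fin n)) :
    ∑ H : Finset (Fin n), (-1:ℍ)^((A ∩ H).card) = if A = ∅ then (2:ℍ)^n else 0 := by
  rcases eq_or_ne A ∅ with hA|hA
  · subst hA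
    simp [Finset.card_univ, Fintype.card_finset]
  · rw [if_neg hA]
    obtain ⟨a, ha⟩ := Finset.nonempty_iff_ne_empty.2 hA
    have key : ∀ H : Finset (Fin n),
        (-1:ℍ)^((A ∩ symmDiff H {a}).card) = -(-1:ℍ)^((A ∩ H).card) := by
      intro H
      have e1 : A ∩ symmDiff H {a} = symmDiff (A ∩ H) (A ∩ {a}) :=
        inf_symmDiff_distrib_left A H {a}
      have e2 : A ∩ {a} = {a} := by
        rw [Finset.inter_comm]
        exact Finset.singleton_inter_of_mem ha
      rw [e1, e2, neg_one_pow_symmDiff]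
      simp
    have h0 : ∑ H : Finset (Fin n), (-1:ℍ)^((A ∩ symmDiff H {a}).card)
        = ∑ H : Finset (Fin n), (-1:ℍ)^((A ∩ H).card) :=
      sum_symmDiff_reindex {a} (fun H => (-1:ℍ)^((A ∩ H).card))
    simp_rw [key, Finset.sum_neg_distrib] at h0
    set S := ∑ H : Finset (Fin n), (-1:ℍ)^((A ∩ H).card) with hS
    have h2 : (2:ℝ) • S = 0 := by
      rw [two_smul]
      nth_rewrite 1 [← h0]
      exact neg_add_cancel S
    rcases smul_eq_zero.1 h2 with h'|h'
    · norm_num at h'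
    · exact h'

lemma zOf_re (α β : Fin n → ℝ) (h : Fin n) : (zOf α β h).re = α h := by
  simp [zOf]

lemma zOf_im (α β : Fin n → ℝ) (h : Fin n) : (zOf α β h).im = β h := by
  simp [zOf]

lemma conjQ_ptOf {I : Fin n → ℍ} (hI : ∀ h, I h ∈ Sph) (H : Finset (Fin n))
    (α β : Fin n → ℝ) : conjQ H (ptOf α β I) = ptOf α (negOn H β) I := by
  funext h
  simp only [conjQ, ptOf, negOn]
  by_cases hh : h ∈ H
  · simp only [hh, if_true, star_add, star_mul, sph_star (hI h)]
    push_cast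
    rw [Quaternion.star_coe, Quaternion.star_coe]
    rw [neg_mul, ← Quaternion.coe_commutes, neg_mul]
  · simp [hh]

lemma zOf_negOn (H : Finset (Fin n)) (α β : Fin n → ℝ) :
    zOf α (negOn H β) = zConj H (zOf α β) := by
  funext h
  simp only [zOf, zConj, negOn]
  by_cases hh : h ∈ H
  · simp only [hh, if_true, map_add, map_mul, Complex.conj_ofReal, Complex.conj_I]
    push_cast
    ring
  · simp [hh]

lemma conjCoord_eq_zConj (a : Fin n) (z : Fin n → ℂ) :
    conjCoord a z = zConj {a} z := by
  funext h
  simp only [conjCoord, zConj, Finset.mem_singleton, Function.update]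
  by_cases hh : h = a
  · subst hh; simp
  · simp [hh]

lemma zConj_insert (a : Fin n) (H : Finset (Fin n)) (ha : a ∉ H) (z : Fin n → ℂ) :
    zConj (insert a H) z = conjCoord a (zConj H z) := by
  funext h
  simp only [zConj, conjCoord, Function.update, Finset.mem_insert]
  by_cases hh : h = a
  · subst hh; simp [ha]
  · simp [hh]

lemma zConj_mem {D : Set (Fin n → ℂ)} (hinv : ConjInv D) (H : Finset (Fin n))
    {z : Fin n → ℂ} (hz : z ∈ D) : zConj H z ∈ D := by
  induction H using Finset.induction_on with
  | empty =>
    have : zConj ∅ z = z := by funext h; simp [zConj]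
    simpa [this] using hz
  | @insert _ _ ha ih =>
    rw [zConj_insert _ _ ha]
    exact hinv _ _ ih

lemma conjQ_conjQ (H L : Finset (Fin n)) (x : Fin n → ℍ) :
    conjQ H (conjQ L x) = conjQ (symmDiff H L) x := by
  funext h
  simp only [conjQ, Finset.mem_symmDiff]
  by_cases h1 : h ∈ H <;> by_cases h2 : h ∈ L <;> simp [h1, h2]


lemma sign_mul_comm (m : ℕ) (x : ℍ) : (-1:ℍ)^m * x = x * (-1)^m :=
  ((Commute.neg_one_left x).pow_left m).eq

lemma twopow_inv_comm (x : ℍ) : ((2:ℍ)^n)⁻¹ * x = x * ((2:ℍ)^n)⁻¹ :=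
  (((Commute.ofNat_left 2 x).pow_left n).inv_left₀).eq

lemma two_pow_ne_zero : ((2:ℍ)^n) ≠ 0 := by
  apply pow_ne_zero
  intro h
  have h1 : ((1:ℍ)+1).re = 0 := by rw [one_add_one_eq_two, h]; rfl
  simp [show (1:ℍ).re = 1 from rfl] at h1

lemma sign_insert (a : Fin n) (K H : Finset (Fin n)) (ha : a ∉ H) :
    (-1:ℍ)^((K ∩ insert a H).card) = (if a ∈ K then (-1:ℍ) else 1) * (-1)^((K∩H).card) := by
  rw [Finset.inter_comm K (insert a H), Finset.inter_comm K H]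
  by_cases haK : a ∈ K
  · rw [Finset.insert_inter_of_mem haK,
      Finset.card_insert_of_notMem (fun hmem => ha (Finset.mem_inter.1 hmem).1),
      if_pos haK, pow_succ]
    exact ((Commute.refl (-1:ℍ)).pow_left _).eq
  · rw [Finset.insert_inter_of_notMem haK, if_neg haK, one_mul]

lemma stem_zConj {D : Set (Fin n → ℂ)} {F : Finset (Fin n) → (Fin n → ℂ) → ℍ}
    (hF : IsStem D F) (hinv : ConjInv D) (K H : Finset (Fin n)) {z : Fin n → ℂ}
    (hz : z ∈ D) : F K (zConj H z) = (-1:ℍ)^((K ∩ H).card) * F K z := by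
  induction H using Finset.induction_on with
  | empty =>
    have : zConj ∅ z = z := by funext h; simp [zConj]
    simp [this]
  | @insert a H ha ih =>
    rw [zConj_insert a H ha, hF K a _ (zConj_mem hinv H hz), ih, sign_insert a K H ha,
      mul_assoc]



lemma qi_mem : (⟨0,1,0,0⟩ : ℍ) ∈ Sph := by
  show (⟨0,1,0,0⟩ : ℍ)^2 = -1
  erw [pow_two]
  ext <;> simp [Quaternion.re_mul, Quaternion.imI_mul, Quaternion.imJ_mul, Quaternion.imK_mul]

lemma mul_sign (m : ℕ) (a b : ℍ) : a * ((-1:ℍ)^m * b) = (-1:ℍ)^m * (a * b) := by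
  rw [← mul_assoc, ← sign_mul_comm, mul_assoc]

lemma mul_cpow (a b : ℍ) : a * (((2:ℍ)^n)⁻¹ * b) = ((2:ℍ)^n)⁻¹ * (a * b) := by
  rw [← mul_assoc, ← twopow_inv_comm, mul_assoc]

lemma sign_symmDiff_singleton (a : Fin n) (K H : Finset (Fin n)) :
    (-1:ℍ)^((K ∩ symmDiff H {a}).card) =
      (if a ∈ K then (-1:ℍ) else 1) * (-1)^((K∩H).card) := by
  have e1 : K ∩ symmDiff H {a} = symmDiff (K ∩ H) (K ∩ {a}) :=
    inf_symmDiff_distrib_left K H {a}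
  rw [e1]
  by_cases haK : a ∈ K
  · have e2 : K ∩ {a} = {a} := by
      rw [Finset.inter_comm]; exact Finset.singleton_inter_of_mem haK
    rw [e2, neg_one_pow_symmDiff, Finset.card_singleton, pow_one, if_pos haK,
      ← sign_mul_comm]
  · have e2 : K ∩ {a} = ∅ := by
      rw [Finset.inter_comm]; exact Finset.singleton_inter_of_notMem haK
    rw [e2, if_neg haK, one_mul]
    congr 1
    simpa using congrArg Finset.card (symmDiff_bot (K ∩ H))

theorem fwd (D : Set (Fin n → ℂ)) (hinv : ConjInv D) (f : (Fin n → ℍ) → ℍ)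
    (hS : IsSlice D f) :
    ∃ I : Fin n → ℍ, (∀ h, I h ∈ Sph) ∧
        ∀ α β : Fin n → ℝ, zOf α β ∈ D →
          ∀ J : Fin n → ℍ, (∀ h, J h ∈ Sph) →
            f (ptOf α β J) =
              ((2 : ℍ) ^ n)⁻¹ * ∑ K : Finset (Fin n), ∑ H : Finset (Fin n),
                (-1 : ℍ) ^ ((K ∩ H).card) *
                  (JK J K * ((JK I K)⁻¹ * f (conjQ H (ptOf α β I)))) := by
  obtain ⟨F, hF, hInd⟩ := hS
  set I : Fin n → ℍ := fun _ => ⟨0,1,0,0⟩ with hIdef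
  have hI : ∀ h, I h ∈ Sph := fun _ => qi_mem
  refine ⟨I, hI, ?_⟩
  intro α β hz J hJ
  set z := zOf α β with hzdef
  have step1 : ∀ H : Finset (Fin n), f (conjQ H (ptOf α β I)) =
      ∑ L : Finset (Fin n), (-1:ℍ)^((L∩H).card) * (JK I L * F L z) := by
    intro H
    have hmem : zOf α (negOn H β) ∈ D := by
      rw [zOf_negOn]; exact zConj_mem hinv H hz
    rw [conjQ_ptOf hI H α β, hInd α (negOn H β) I hI hmem]
    apply Finset.sum_congr rfl
    intro L _
    rw [zOf_negOn, stem_zConj hF hinv L H hz]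
    exact mul_sign _ _ _
  calc f (ptOf α β J) = ∑ K : Finset (Fin n), JK J K * F K z := hInd α β J hJ hz
    _ = ((2:ℍ)^n)⁻¹ * ∑ K : Finset (Fin n), ∑ H : Finset (Fin n),
          (-1:ℍ)^((K ∩ H).card) *
            (JK J K * ((JK I K)⁻¹ * f (conjQ H (ptOf α β I)))) := by
        have step2 : ∀ K H : Finset (Fin n),
            (-1:ℍ)^((K∩H).card) * (JK J K * ((JK I K)⁻¹ * f (conjQ H (ptOf α β I)))) =
            ∑ L : Finset (Fin n), (-1:ℍ)^(((symmDiff K L) ∩ H).card) *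
              (JK J K * ((JK I K)⁻¹ * (JK I L * F L z))) := by
          intro K H
          rw [step1 H, Finset.mul_sum, Finset.mul_sum, Finset.mul_sum]
          apply Finset.sum_congr rfl
          intro L _
          rw [mul_sign, mul_sign, ← mul_assoc]
          congr 1
          have e : symmDiff K L ∩ H = symmDiff (K ∩ H) (L ∩ H) :=
            inf_symmDiff_distrib_right K L H
          rw [e, neg_one_pow_symmDiff]
        simp_rw [step2]
        have step3 : ∀ K : Finset (Fin n), ∑ H : Finset (Fin n), ∑ L : Finset (Fin n),
            (-1:ℍ)^(((symmDiff K L) ∩ H).card) *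
              (JK J K * ((JK I K)⁻¹ * (JK I L * F L z))) =
            (2:ℍ)^n * (JK J K * F K z) := by
          intro K
          rw [Finset.sum_comm]
          have : ∀ L : Finset (Fin n), ∑ H : Finset (Fin n),
              (-1:ℍ)^(((symmDiff K L) ∩ H).card) *
                (JK J K * ((JK I K)⁻¹ * (JK I L * F L z))) =
              (if K = L then (2:ℍ)^n else 0) * (JK J K * ((JK I K)⁻¹ * (JK I L * F L z))) := by
            intro L
            rw [← Finset.sum_mul, orth (symmDiff K L)]
            congr 1
            simp [symmDiff_eq_bot, eq_comm]
          simp_rw [this, ite_mul, zero_mul]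
          rw [Finset.sum_ite_eq, if_pos (Finset.mem_univ K),
            inv_mul_cancel_left₀ (JK_ne_zero hI K)]
        simp_rw [step3]
        rw [← Finset.mul_sum, inv_mul_cancel_left₀ two_pow_ne_zero]

lemma eps_mul_comm (c : ℍ) (hc : c = -1 ∨ c = 1) (x : ℍ) : c * x = x * c := by
  rcases hc with h|h <;> subst h <;> simp

theorem bwd (D : Set (Fin n → ℂ)) (hinv : ConjInv D) (f : (Fin n → ℍ) → ℍ)
    (I : Fin n → ℍ) (hI : ∀ h, I h ∈ Sph)
    (hcrit : ∀ α β : Fin n → ℝ, zOf α β ∈ D →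
      ∀ J : Fin n → ℍ, (∀ h, J h ∈ Sph) →
        f (ptOf α β J) =
          ((2 : ℍ) ^ n)⁻¹ * ∑ K : Finset (Fin n), ∑ H : Finset (Fin n),
            (-1 : ℍ) ^ ((K ∩ H).card) *
              (JK J K * ((JK I K)⁻¹ * f (conjQ H (ptOf α β I))))) :
    IsSlice D f := by
  refine ⟨fun K w => ((2:ℍ)^n)⁻¹ * ∑ H : Finset (Fin n), (-1:ℍ)^((K∩H).card) *
      ((JK I K)⁻¹ *
        f (conjQ H (ptOf (fun h => (w h).re) (fun h => (w h).im) I))), ?_, ?_⟩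
  · -- IsStem
    intro K a w hw
    have hre : (fun h => ((conjCoord a w) h).re) = (fun h => (w h).re) := by
      funext h
      simp only [conjCoord, Function.update]
      by_cases hh : h = a
      · subst hh; simp
      · simp [hh]
    have him : (fun h => ((conjCoord a w) h).im) =
        negOn {a} (fun h => (w h).im) := by
      funext h
      simp only [conjCoord, Function.update, negOn, Finset.mem_singleton]
      by_cases hh : h = a
      · subst hh; simp
      · simp [hh]
    simp only [hre, him]
    set y : Fin n → ℍ := ptOf (fun h => (w h).re) (fun h => (w h).im) I with hy
    have hpt : ptOf (fun h => (w h).re) (negOn {a} fun h => (w h).im) I =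
        conjQ {a} y := (conjQ_ptOf hI {a} _ _).symm
    rw [hpt]
    simp only [conjQ_conjQ]
    have reidx := sum_symmDiff_reindex {a}
      (fun H => (-1:ℍ)^((K ∩ symmDiff H {a}).card) * ((JK I K)⁻¹ * f (conjQ H y)))
    simp only [symmDiff_symmDiff_cancel_right] at reidx
    rw [reidx]
    simp_rw [sign_symmDiff_singleton a K, mul_assoc]
    rw [← Finset.mul_sum, ← mul_cpow]
  · -- Induces
    intro α β J hJ hz
    rw [hcrit α β hz J hJ, Finset.mul_sum]
    apply Finset.sum_congr rfl
    intro K _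
    have hre : (fun h => ((zOf α β) h).re) = α := funext (zOf_re α β)
    have him : (fun h => ((zOf α β) h).im) = β := funext (zOf_im α β)
    simp only [hre, him]
    rw [mul_cpow]
    congr 1
    rw [Finset.mul_sum]
    apply Finset.sum_congr rfl
    intro H _
    exact (mul_sign _ _ _).symm

/-- **Sliceness criterion.** -/
theorem stmt3 (n : ℕ) (hn : 0 < n) (D : Set (Fin n → ℂ)) (hne : D.Nonempty)
    (hinv : ConjInv D) (f : (Fin n → ℍ) → ℍ) :
    IsSlice D f ↔
      ∃ I : Fin n → ℍ, (∀ h, I h ∈ Sph) ∧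
        ∀ α β : Fin n → ℝ, zOf α β ∈ D →
          ∀ J : Fin n → ℍ, (∀ h, J h ∈ Sph) →
            f (ptOf α β J) =
              ((2 : ℍ) ^ n)⁻¹ * ∑ K : Finset (Fin n), ∑ H : Finset (Fin n),
                (-1 : ℍ) ^ ((K ∩ H).card) *
                  (JK J K * ((JK I K)⁻¹ * f (conjQ H (ptOf α β I)))) := by
  constructor
  · intro h
    exact fwd D hinv f h
  · rintro ⟨I, hI, hcrit⟩
    exact bwd D hinv f I hI hcrit
end
end

section
/- Let D be open, let F = (F_K)_K be a C¹ stem function on D, and let f = ℐ(F). The following are equivalent: (i) F is holomorphic, i.e. for every h and every K with h ∉ K, ∂F_K/∂α_h = ∂F_{K∪{h}}/∂β_h and ∂F_K/∂β_h = −∂F_{K∪{h}}/∂α_h on D; (ii) ∂f/∂x_h^c = 0 on Ω_D for every h ∈ {1,…,n}; (iii) there exists J ∈ 𝕊 such that the restriction f_J satisfies ∂f_J/∂α_h + J·∂f_J/∂β_h = 0 on Ω_D(J) for all h, where points of (ℂ_J)ⁿ are written (α₁+Jβ₁,…,αₙ+Jβₙ); (iv) for every J ∈ 𝕊, f_J satisfies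 the equations in (iii). -/
noncomputable section

variable {n : ℕ}

set_option linter.unusedSectionVars false
set_option maxHeartbeats 1000000

section Aux
variable {γ : Type*} [DecidableEq γ]

lemma symmDiff_singleton_of_mem' {K : Finset γ} {h : γ} (hm : h ∈ K) :
    symmDiff K {h} = K.erase h := by
  ext a
  simp only [Finset.mem_symmDiff, Finset.mem_erase, Finset.mem_singleton]
  constructor
  · rintro (⟨ha, hna⟩ | ⟨ha, hna⟩)
    · exact ⟨hna, ha⟩
    · exact absurd (ha ▸ hm) hna
  · rintro ⟨hne, ha⟩; exact Or.inl ⟨ha, hne⟩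

lemma symmDiff_singleton_of_not_mem' {K : Finset γ} {h : γ} (hm : h ∉ K) :
    symmDiff K {h} = insert h K := by
  ext a
  simp only [Finset.mem_symmDiff, Finset.mem_insert, Finset.mem_singleton]
  constructor
  · rintro (⟨ha, _⟩ | ⟨ha, _⟩)
    · exact Or.inr ha
    · exact Or.inl ha
  · rintro (rfl | ha)
    · exact Or.inr ⟨rfl, hm⟩
    · exact Or.inl ⟨ha, fun hc => hm (hc ▸ ha)⟩

lemma neg_one_pow_symmDiff_singleton' (A : Finset γ) (s : γ) :
    (-1:ℝ)^((symmDiff A {s}).card) = -(-1:ℝ)^(A.card) := by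
  by_cases hs : s ∈ A
  · rw [symmDiff_singleton_of_mem' hs, Finset.card_erase_of_mem hs]
    have h1 : 1 ≤ A.card := Finset.card_pos.mpr ⟨s, hs⟩
    obtain ⟨m, hm⟩ : ∃ m, A.card = m + 1 := ⟨A.card - 1, by omega⟩
    rw [hm]
    simp [pow_succ]
  · rw [symmDiff_singleton_of_not_mem' hs, Finset.card_insert_of_notMem hs, pow_succ]
    ring

lemma card_symmDiff_parity' (X Y : Finset γ) :
    (-1:ℝ)^((symmDiff X Y).card) = (-1)^(X.card + Y.card) := by
  have h1 : (symmDiff X Y).card = (X \ Y).card + (Y \ X).card := by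
    rw [symmDiff_def]
    exact Finset.card_union_of_disjoint (disjoint_sdiff_sdiff)
  have h2 : (X \ Y).card + (X ∩ Y).card = X.card := Finset.card_sdiff_add_card_inter X Y
  have h3 : (Y \ X).card + (Y ∩ X).card = Y.card := Finset.card_sdiff_add_card_inter Y X
  have h4 : (Y ∩ X).card = (X ∩ Y).card := by rw [Finset.inter_comm]
  have : X.card + Y.card = (symmDiff X Y).card + 2 * (X ∩ Y).card := by omega
  rw [this, pow_add, pow_mul, neg_one_sq, one_pow, mul_one]

lemma inter_symmDiff_right' (S H K : Finset γ) :
    symmDiff (S ∩ H) (K ∩ H) = (symmDiff S K) ∩ H := by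
  ext a
  simp only [Finset.mem_symmDiff, Finset.mem_inter]
  tauto

variable [Fintype γ]

lemma sum_neg_one_pow_inter' {S : Finset γ} (hS : S.Nonempty) :
    ∑ H : Finset γ, (-1:ℝ)^((S ∩ H).card) = 0 := by
  obtain ⟨s, hs⟩ := hS
  apply Finset.sum_involution (fun H _ => symmDiff H {s})
  · intro H _
    have h1 : S ∩ symmDiff H {s} = symmDiff (S ∩ H) {s} := by
      have hss : S ∩ {s} = {s} := Finset.inter_singleton_of_mem hs
      calc S ∩ symmDiff H {s} = symmDiff (S ∩ H) (S ∩ {s}) := by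
            ext a
            simp only [Finset.mem_symmDiff, Finset.mem_inter]
            tauto
        _ = symmDiff (S ∩ H) {s} := by rw [hss]
    rw [h1, neg_one_pow_symmDiff_singleton']; ring
  · intro H _ _
    intro hc
    have : s ∈ symmDiff H {s} ↔ s ∈ H := by rw [hc]
    simp [Finset.mem_symmDiff] at this
  · intro H _; exact symmDiff_symmDiff_cancel_right {s} H
  · intro H _; exact Finset.mem_univ _

lemma separation' {M : Type*} [AddCommGroup M] [Module ℝ M]
    (a : Finset γ → M)
    (ha : ∀ H : Finset γ, ∑ K : Finset γ, (-1:ℝ)^((K ∩ H).card) • a K = 0)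
    (K₀ : Finset γ) : a K₀ = 0 := by
  have key : ∑ H : Finset γ, (-1:ℝ)^((K₀ ∩ H).card) •
      (∑ K : Finset γ, (-1:ℝ)^((K ∩ H).card) • a K) = 0 := by
    simp only [ha, smul_zero, Finset.sum_const_zero]
  simp_rw [Finset.smul_sum] at key
  rw [Finset.sum_comm] at key
  have key2 : ∀ K : Finset γ,
      (∑ H : Finset γ, (-1:ℝ)^((K₀ ∩ H).card) • ((-1:ℝ)^((K ∩ H).card) • a K))
      = (∑ H : Finset γ, (-1:ℝ)^(((symmDiff K₀ K) ∩ H).card)) • a K := by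
    intro K
    rw [Finset.sum_smul]
    congr 1
    funext H
    rw [smul_smul, ← pow_add, ← inter_symmDiff_right', card_symmDiff_parity']
  simp_rw [key2] at key
  by_cases hK : ∀ K : Finset γ, K ≠ K₀ →
      (∑ H : Finset γ, (-1:ℝ)^(((symmDiff K₀ K) ∩ H).card)) • a K = 0
  · rw [Finset.sum_eq_single K₀ (fun K _ hne => hK K hne)
      (fun h => absurd (Finset.mem_univ _) h)] at key
    have hz : symmDiff K₀ K₀ = ∅ := by simp
    rw [hz] at key
    simp only [Finset.empty_inter, Finset.card_empty, pow_zero, Finset.sum_const,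
      Finset.card_univ, nsmul_eq_mul, mul_one] at key
    have hcard : (0:ℝ) < (Fintype.card (Finset γ) : ℝ) := by
      exact_mod_cast Fintype.card_pos
    rcases smul_eq_zero.mp key with h | h
    · exact absurd h (ne_of_gt hcard)
    · exact h
  · push_neg at hK
    obtain ⟨K, hne, hcon⟩ := hK
    exfalso
    apply hcon
    have hne2 : (symmDiff K₀ K).Nonempty := by
      rw [Finset.nonempty_iff_ne_empty]
      intro hc
      exact hne (symmDiff_eq_bot.mp hc).symm
    rw [sum_neg_one_pow_inter' hne2, zero_smul]
end Aux

def qi : ℍ := ⟨0,1,0,0⟩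

lemma qi_mem_Sph : qi ∈ Sph := by
  show qi ^ 2 = -1
  rw [sq]; ext <;> simp only [Quaternion.re_mul, Quaternion.imI_mul, Quaternion.imJ_mul, Quaternion.imK_mul] <;> simp [qi, Quaternion.re_one, Quaternion.imI_one, Quaternion.imJ_one, Quaternion.imK_one]

lemma pow_sph_ne_zero {J : ℍ} (hJ : J ∈ Sph) (m : ℕ) : J ^ m ≠ 0 :=
  pow_ne_zero m (sph_ne_zero hJ)

lemma smul_sph {J : ℍ} (hJ : J ∈ Sph) (c : ℝ) (hc : c = 1 ∨ c = -1) : c • J ∈ Sph := by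
  show (c • J) ^ 2 = -1
  rw [smul_pow]
  rcases hc with rfl | rfl <;> simp [hJ.out]

lemma list_map_smul_prod (q : ℍ) {α : Type*} (c : α → ℝ) (l : List α) :
    (l.map (fun k => c k • q)).prod = (l.map c).prod • q ^ l.length := by
  induction l with
  | nil => simp
  | cons a t ih =>
    simp only [List.map_cons, List.prod_cons, List.length_cons, ih]
    rw [smul_mul_smul_comm]
    congr 1
    exact (pow_succ' q t.length).symm.trans (pow_succ q t.length)

lemma JK_smul {n : ℕ} (c : Fin n → ℝ) (q : ℍ) (K : Finset (Fin n)) :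
    JK (fun k => c k • q) K = (∏ k ∈ K, c k) • q ^ K.card := by
  unfold JK
  rw [list_map_smul_prod, Finset.length_sort]
  congr 1
  rw [List.Perm.prod_eq (List.Perm.map c (Finset.sort_perm_toList K _)), Finset.prod_map_toList]

lemma JK_const {n : ℕ} (J : ℍ) (K : Finset (Fin n)) :
    JK (fun _ => J) K = J ^ K.card := by
  have h1 : (fun (_ : Fin n) => J) = fun k => (1:ℝ) • J := by funext k; simp
  rw [h1, JK_smul]
  simp

lemma JK_sign {n : ℕ} (H K : Finset (Fin n)) :
    JK (fun k => (if k ∈ H then (-1:ℝ) else 1) • qi) K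
      = ((-1:ℝ)^((K ∩ H).card)) • qi ^ K.card := by
  rw [JK_smul]
  congr 1
  rw [Finset.prod_ite_mem, Finset.prod_const]

lemma ite_neg_one_pow {n : ℕ} (K : Finset (Fin n)) (h' : Fin n) :
    (if h' ∈ K then (-1:ℝ) else 1) = (-1:ℝ)^((K ∩ {h'}).card) := by
  by_cases hm : h' ∈ K
  · rw [if_pos hm, Finset.inter_singleton_of_mem hm, Finset.card_singleton, pow_one]
  · rw [if_neg hm, Finset.inter_singleton_of_notMem hm, Finset.card_empty, pow_zero]

section Analysis
variable {n : ℕ} {D : Set (Fin n → ℂ)} {F : Finset (Fin n) → (Fin n → ℂ) → ℍ}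
  {f : (Fin n → ℍ) → ℍ}

lemma hdiff (hD : IsOpen D) (hC1 : StemC1 D F) (K : Finset (Fin n)) {z : Fin n → ℂ}
    (hz : z ∈ D) : DifferentiableAt ℝ (F K) z :=
  ((hC1 K).differentiableOn one_ne_zero).differentiableAt (hD.mem_nhds hz)

lemma zOf_re_im (z : Fin n → ℂ) : zOf (fun h => (z h).re) (fun h => (z h).im) = z := by
  funext h; simp [zOf, Complex.re_add_im]

lemma slice_eq (hf : Induces D F f) {J : ℍ} (hJ : J ∈ Sph) {z : Fin n → ℂ} (hz : z ∈ D) :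
    f (phiJ J z) = ∑ K : Finset (Fin n), J ^ K.card * F K z := by
  have h1 : phiJ J z = ptOf (fun h => (z h).re) (fun h => (z h).im) (fun _ => J) := rfl
  rw [h1, hf _ _ _ (fun _ => hJ) (by rw [zOf_re_im]; exact hz)]
  simp_rw [JK_const, zOf_re_im]

lemma fderiv_slice (hD : IsOpen D) (hC1 : StemC1 D F) (hf : Induces D F f)
    {J : ℍ} (hJ : J ∈ Sph) {z : Fin n → ℂ} (hz : z ∈ D) (v : Fin n → ℂ) :
    fderiv ℝ (fun w => f (phiJ J w)) z v
      = ∑ K : Finset (Fin n), J ^ K.card * fderiv ℝ (F K) z v := by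
  have hev : (fun w => f (phiJ J w)) =ᶠ[nhds z]
      (fun w => ∑ K : Finset (Fin n), J ^ K.card • F K w) := by
    filter_upwards [hD.mem_nhds hz] with w hw
    simpa [smul_eq_mul] using slice_eq hf hJ hw
  rw [hev.fderiv_eq, fderiv_fun_sum (A := fun K w => J ^ K.card • F K w) (fun K _ => ((hdiff hD hC1 K hz).const_smul (J ^ K.card))),
    ContinuousLinearMap.sum_apply]
  refine Finset.sum_congr rfl fun K _ => ?_
  rw [fderiv_fun_const_smul (hdiff hD hC1 K hz) (J ^ K.card), ContinuousLinearMap.smul_apply,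
    smul_eq_mul]

def conjL (h : Fin n) : (Fin n → ℂ) →L[ℝ] (Fin n → ℂ) :=
  ContinuousLinearMap.pi fun k =>
    if k = h then Complex.conjCLE.toContinuousLinearMap.comp (ContinuousLinearMap.proj k)
    else ContinuousLinearMap.proj k

lemma conjL_apply (h : Fin n) (z : Fin n → ℂ) : conjL h z = conjCoord h z := by
  funext k
  simp only [conjL, ContinuousLinearMap.pi_apply, conjCoord, Function.update_apply]
  by_cases hk : k = h
  · subst hk; simp
  · simp [hk]

lemma conjL_single_one (h h' : Fin n) : conjL h' (Pi.single h 1) = Pi.single h 1 := by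
  funext k
  simp only [conjL, ContinuousLinearMap.pi_apply]
  by_cases hk : k = h'
  · subst hk
    simp only [if_pos rfl, ContinuousLinearMap.comp_apply, ContinuousLinearMap.proj_apply]
    by_cases hkh : k = h
    · subst hkh; simp
    · simp [Pi.single_apply, hkh]
  · simp [hk]

lemma conjL_single_I (h h' : Fin n) :
    conjL h' (Pi.single h Complex.I) =
      if h = h' then -(Pi.single h Complex.I) else Pi.single h Complex.I := by
  funext k
  by_cases hh : h = h'
  · subst hh
    simp only [if_pos rfl, conjL, ContinuousLinearMap.pi_apply]
    by_cases hk : k = h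
    · subst hk; simp
    · simp [hk, Pi.single_apply, Ne.symm hk]
  · rw [if_neg hh]
    simp only [conjL, ContinuousLinearMap.pi_apply]
    by_cases hk : k = h'
    · subst hk
      simp only [if_pos rfl, ContinuousLinearMap.comp_apply, ContinuousLinearMap.proj_apply,
        Pi.single_apply, if_neg (fun hc : k = h => hh hc.symm)]
      simp [Pi.single_apply, if_neg (fun hc : k = h => hh hc.symm)]
    · simp [hk]

lemma fderiv_conj (hD : IsOpen D) (hinv : ConjInv D) (hF : IsStem D F) (hC1 : StemC1 D F)
    (K : Finset (Fin n)) (h' : Fin n) {z : Fin n → ℂ} (hz : z ∈ D) (v : Fin n → ℂ) :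
    fderiv ℝ (F K) (conjCoord h' z) (conjL h' v)
      = (if h' ∈ K then (-1:ℝ) else 1) • fderiv ℝ (F K) z v := by
  set ε : ℝ := if h' ∈ K then (-1:ℝ) else 1 with hε
  have hstem : ∀ w ∈ D, F K (conjCoord h' w) = ε • F K w := by
    intro w hw
    rw [hF K h' w hw]
    by_cases hm : h' ∈ K <;> simp [hε, hm]
  have hev : (fun w => F K (conjL h' w)) =ᶠ[nhds z] (fun w => ε • F K w) := by
    filter_upwards [hD.mem_nhds hz] with w hw
    rw [conjL_apply]; exact hstem w hw
  have hdF : DifferentiableAt ℝ (F K) (conjCoord h' z) := hdiff hD hC1 K (hinv h' z hz)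
  have hchain : fderiv ℝ (fun w => F K (conjL h' w)) z
      = (fderiv ℝ (F K) (conjCoord h' z)).comp (conjL h') := by
    have := fderiv_comp (𝕜 := ℝ) (x := z) (by rw [← conjL_apply] at hdF; exact hdF)
      (conjL h').differentiableAt
    rw [show (fun w => F K (conjL h' w)) = F K ∘ (conjL h') from rfl, this,
      ContinuousLinearMap.fderiv, conjL_apply]
  have hd : DifferentiableAt ℝ (F K) z := hdiff hD hC1 K hz
  have h2 : fderiv ℝ (fun w => ε • F K w) z = ε • fderiv ℝ (F K) z :=
    fderiv_const_smul hd ε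
  have heq : fderiv ℝ (fun w => F K (conjL h' w)) z = fderiv ℝ (fun w => ε • F K w) z :=
    hev.fderiv_eq
  rw [hchain, h2] at heq
  have h4 := DFunLike.ext_iff.mp heq v
  simpa using h4

lemma fderiv_conj_single_one (hD : IsOpen D) (hinv : ConjInv D) (hF : IsStem D F)
    (hC1 : StemC1 D F) (K : Finset (Fin n)) (h h' : Fin n) {z : Fin n → ℂ} (hz : z ∈ D) :
    fderiv ℝ (F K) (conjCoord h' z) (Pi.single h 1)
      = (if h' ∈ K then (-1:ℝ) else 1) • fderiv ℝ (F K) z (Pi.single h 1) := by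
  have h0 := fderiv_conj hD hinv hF hC1 K h' hz (Pi.single h 1)
  rwa [conjL_single_one] at h0

lemma fderiv_conj_single_I (hD : IsOpen D) (hinv : ConjInv D) (hF : IsStem D F)
    (hC1 : StemC1 D F) (K : Finset (Fin n)) (h h' : Fin n) {z : Fin n → ℂ} (hz : z ∈ D) :
    fderiv ℝ (F K) (conjCoord h' z) (Pi.single h Complex.I)
      = (if h = h' then (-1:ℝ) else 1) • (if h' ∈ K then (-1:ℝ) else 1) •
          fderiv ℝ (F K) z (Pi.single h Complex.I) := by
  have h0 := fderiv_conj hD hinv hF hC1 K h' hz (Pi.single h Complex.I)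
  by_cases hh : h = h'
  · rw [conjL_single_I, if_pos hh, map_neg] at h0
    rw [if_pos hh, neg_one_smul]
    exact neg_eq_iff_eq_neg.mp h0
  · rw [conjL_single_I, if_neg hh] at h0
    rw [if_neg hh, one_smul]
    exact h0

lemma dminus_conj (hD : IsOpen D) (hinv : ConjInv D) (hF : IsStem D F) (hC1 : StemC1 D F)
    (h h' : Fin n) (K : Finset (Fin n)) {z : Fin n → ℂ} (hz : z ∈ D) :
    Dminus F h K (conjCoord h' z) = (-1:ℝ)^((K ∩ {h'}).card) • Dminus F h K z := by
  have e1 := fderiv_conj_single_one hD hinv hF hC1 K h h' hz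
  have e2 := fderiv_conj_single_I hD hinv hF hC1 (symmDiff K {h}) h h' hz
  have hsc : (if h = h' then (-1:ℝ) else 1) * (if h' ∈ symmDiff K {h} then (-1:ℝ) else 1)
      = (if h' ∈ K then (-1:ℝ) else 1) := by
    by_cases hh : h = h'
    · subst hh
      have hmem : h ∈ symmDiff K {h} ↔ ¬ h ∈ K := by simp [Finset.mem_symmDiff]
      rw [if_pos rfl, if_congr hmem rfl rfl]
      by_cases hm : h ∈ K <;> simp [hm]
    · have hmem : h' ∈ symmDiff K {h} ↔ h' ∈ K := by
        have hne : ¬ h' = h := fun hc => hh hc.symm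
        simp only [Finset.mem_symmDiff, Finset.mem_singleton]
        tauto
      rw [if_neg hh, one_mul, if_congr hmem rfl rfl]
  unfold Dminus
  rw [e1, e2, smul_smul, smul_smul, mul_assoc, hsc, ← ite_neg_one_pow K h']
  set ε : ℝ := if h' ∈ K then (-1:ℝ) else 1
  set A := fderiv ℝ (F K) z (Pi.single h 1)
  set B := fderiv ℝ (F (symmDiff K {h})) z (Pi.single h Complex.I)
  set s : ℝ := (-1:ℝ)^((K ∩ {h}).card)
  module

lemma dminus_sum_conj (hD : IsOpen D) (hinv : ConjInv D) (hF : IsStem D F) (hC1 : StemC1 D F)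
    (J : ℍ)
    (hyp : ∀ z ∈ D, ∀ h : Fin n, ∑ K : Finset (Fin n), J ^ K.card * Dminus F h K z = 0)
    (H : Finset (Fin n)) :
    ∀ z ∈ D, ∀ h : Fin n,
      ∑ K : Finset (Fin n), (-1:ℝ)^((K ∩ H).card) • (J ^ K.card * Dminus F h K z) = 0 := by
  induction H using Finset.induction_on with
  | empty => intro z hz h; simpa using hyp z hz h
  | @insert a H' ha ih =>
    intro z hz h
    have key := ih (conjCoord a z) (hinv a z hz) h
    have hterm : ∀ K : Finset (Fin n),
        (-1:ℝ)^((K ∩ H').card) • (J ^ K.card * Dminus F h K (conjCoord a z))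
        = (-1:ℝ)^((K ∩ insert a H').card) • (J ^ K.card * Dminus F h K z) := by
      intro K
      rw [dminus_conj hD hinv hF hC1 h a K hz, mul_smul_comm, smul_smul, ← pow_add]
      congr 2
      have hdisj : Disjoint (K ∩ H') (K ∩ {a}) := by
        rw [Finset.disjoint_left]
        intro x hx1 hx2
        rw [Finset.mem_inter, Finset.mem_singleton] at hx2
        rw [Finset.mem_inter] at hx1
        exact ha (hx2.2 ▸ hx1.2)
      have hun : K ∩ insert a H' = (K ∩ H') ∪ (K ∩ {a}) := by
        ext x
        simp only [Finset.mem_inter, Finset.mem_insert, Finset.mem_union, Finset.mem_singleton]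
        tauto
      rw [hun, Finset.card_union_of_disjoint hdisj]
    rw [← Finset.sum_congr rfl (fun K _ => hterm K)]
    exact key

lemma pow_reindex {J : ℍ} (hJ : J ∈ Sph) (h : Fin n) (K : Finset (Fin n)) :
    (J : ℍ)^(K.card + 1)
      = (-(-1:ℝ)^(((symmDiff K {h}) ∩ {h}).card)) • J^((symmDiff K {h}).card) := by
  have hJ2 : J ^ 2 = -1 := hJ
  by_cases hm : h ∈ K
  · rw [symmDiff_singleton_of_mem' hm, Finset.card_erase_of_mem hm]
    have h0 : h ∉ K.erase h := Finset.notMem_erase h K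
    rw [Finset.inter_singleton_of_notMem h0, Finset.card_empty, pow_zero]
    have h1 : 1 ≤ K.card := Finset.card_pos.mpr ⟨h, hm⟩
    have h2 : K.card + 1 = (K.card - 1) + 2 := by omega
    rw [h2, pow_add, hJ2]
    simp
  · rw [symmDiff_singleton_of_not_mem' hm, Finset.card_insert_of_notMem hm]
    have h0 : h ∈ insert h K := Finset.mem_insert_self h K
    rw [Finset.inter_singleton_of_mem h0, Finset.card_singleton, pow_one]
    simp

lemma key34 (hD : IsOpen D) (hC1 : StemC1 D F) (hf : Induces D F f)
    {J : ℍ} (hJ : J ∈ Sph) {z : Fin n → ℂ} (hz : z ∈ D) (h : Fin n) :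
    fderiv ℝ (fun w => f (phiJ J w)) z (Pi.single h 1) +
      J * fderiv ℝ (fun w => f (phiJ J w)) z (Pi.single h Complex.I)
      = (2:ℝ) • ∑ K : Finset (Fin n), J ^ K.card * Dminus F h K z := by
  rw [fderiv_slice hD hC1 hf hJ hz (Pi.single h 1),
    fderiv_slice hD hC1 hf hJ hz (Pi.single h Complex.I), Finset.mul_sum]
  have step1 : ∀ K : Finset (Fin n),
      J * (J ^ K.card * fderiv ℝ (F K) z (Pi.single h Complex.I))
        = J ^ (K.card + 1) * fderiv ℝ (F K) z (Pi.single h Complex.I) := by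
    intro K
    rw [← mul_assoc, ← pow_succ']
  simp_rw [step1]
  have hinvol : Function.Involutive (fun K : Finset (Fin n) => symmDiff K {h}) :=
    fun K => symmDiff_symmDiff_cancel_right {h} K
  have step2 : ∑ K : Finset (Fin n), J ^ (K.card + 1) * fderiv ℝ (F K) z (Pi.single h Complex.I)
      = ∑ K : Finset (Fin n), (-(-1:ℝ)^((K ∩ {h}).card)) •
          (J ^ K.card * fderiv ℝ (F (symmDiff K {h})) z (Pi.single h Complex.I)) := by
    apply Fintype.sum_equiv hinvol.toPerm
    intro K
    simp only [Function.Involutive.coe_toPerm]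
    rw [symmDiff_symmDiff_cancel_right ({h} : Finset (Fin n)) K, pow_reindex hJ h K,
      smul_mul_assoc]
  rw [step2, ← Finset.sum_add_distrib, Finset.smul_sum]
  refine Finset.sum_congr rfl fun K _ => ?_
  unfold Dminus
  rw [mul_smul_comm, smul_smul]
  norm_num
  rw [mul_sub, mul_smul_comm]
  module
end Analysis

/-- **Characterizations of slice regularity.** -/
theorem stmt12 (n : ℕ) (hn : 0 < n) (D : Set (Fin n → ℂ)) (hne : D.Nonempty)
    (hinv : ConjInv D) (hD : IsOpen D)
    (F : Finset (Fin n) → (Fin n → ℂ) → ℍ) (hF : IsStem D F) (hC1 : StemC1 D F)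
    (f : (Fin n → ℍ) → ℍ) (hf : Induces D F f) :
    List.TFAE
      [StemHolo D F,
       ∀ h : Fin n, ∀ α β : Fin n → ℝ, ∀ J : Fin n → ℍ,
         (∀ k, J k ∈ Sph) → zOf α β ∈ D →
         ∑ K : Finset (Fin n), JK J K * Dminus F h K (zOf α β) = 0,
       ∃ J ∈ Sph, ∀ z ∈ D, ∀ h : Fin n,
         fderiv ℝ (fun w => f (phiJ J w)) z (Pi.single h 1) +
           J * fderiv ℝ (fun w => f (phiJ J w)) z (Pi.single h Complex.I) = 0,
       ∀ J ∈ Sph, ∀ z ∈ D, ∀ h : Fin n,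
         fderiv ℝ (fun w => f (phiJ J w)) z (Pi.single h 1) +
           J * fderiv ℝ (fun w => f (phiJ J w)) z (Pi.single h Complex.I) = 0] := by
  set P0 : Prop := (∀ z ∈ D, ∀ h : Fin n, ∀ K : Finset (Fin n), Dminus F h K z = 0) with hP0def
  have h1P : StemHolo D F → P0 := by
    intro hol z hz h K
    by_cases hm : h ∈ K
    · have hm' : h ∉ K.erase h := Finset.notMem_erase h K
      have hcr := (hol z hz h (K.erase h) hm').2
      rw [Finset.insert_erase hm] at hcr
      unfold Dminus
      rw [Finset.inter_singleton_of_mem hm, Finset.card_singleton, pow_one,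
        symmDiff_singleton_of_mem' hm, hcr]
      simp
    · have hcr := (hol z hz h K hm).1
      unfold Dminus
      rw [Finset.inter_singleton_of_notMem hm, Finset.card_empty, pow_zero,
        symmDiff_singleton_of_not_mem' hm, hcr]
      simp
  have hP1 : P0 → StemHolo D F := by
    intro hP z hz h K hm
    constructor
    · have h0 := hP z hz h K
      unfold Dminus at h0
      rw [Finset.inter_singleton_of_notMem hm, Finset.card_empty, pow_zero,
        symmDiff_singleton_of_not_mem' hm, one_smul] at h0
      rcases smul_eq_zero.mp h0 with hc | hc
      · exact absurd hc (by norm_num)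
      · exact sub_eq_zero.mp hc
    · have h0 := hP z hz h (insert h K)
      have hmem : h ∈ insert h K := Finset.mem_insert_self h K
      unfold Dminus at h0
      rw [Finset.inter_singleton_of_mem hmem, Finset.card_singleton, pow_one,
        symmDiff_singleton_of_mem' hmem, Finset.erase_insert hm] at h0
      rcases smul_eq_zero.mp h0 with hc | hc
      · exact absurd hc (by norm_num)
      · have hc2 := sub_eq_zero.mp hc
        rw [neg_one_smul] at hc2
        linear_combination (norm := module) hc2
  have hP2 : P0 → ∀ h : Fin n, ∀ α β : Fin n → ℝ, ∀ J : Fin n → ℍ,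
      (∀ k, J k ∈ Sph) → zOf α β ∈ D →
      ∑ K : Finset (Fin n), JK J K * Dminus F h K (zOf α β) = 0 := by
    intro hP h α β J _ hz
    rw [Finset.sum_congr rfl fun K _ => by rw [hP (zOf α β) hz h K, mul_zero]]
    exact Finset.sum_const_zero
  have h2P : (∀ h : Fin n, ∀ α β : Fin n → ℝ, ∀ J : Fin n → ℍ,
      (∀ k, J k ∈ Sph) → zOf α β ∈ D →
      ∑ K : Finset (Fin n), JK J K * Dminus F h K (zOf α β) = 0) → P0 := by
    intro h2 z hz h K
    have hsep : ∀ H : Finset (Fin n),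
        ∑ K : Finset (Fin n), (-1:ℝ)^((K ∩ H).card) • (qi ^ K.card * Dminus F h K z) = 0 := by
      intro H
      have hmemJ : ∀ k : Fin n, (if k ∈ H then (-1:ℝ) else 1) • qi ∈ Sph := by
        intro k
        refine smul_sph qi_mem_Sph _ ?_
        by_cases hk : k ∈ H <;> simp [hk]
      have hzz : zOf (fun k => (z k).re) (fun k => (z k).im) ∈ D := by
        rw [zOf_re_im]; exact hz
      have h0 := h2 h (fun k => (z k).re) (fun k => (z k).im)
        (fun k => (if k ∈ H then (-1:ℝ) else 1) • qi) hmemJ hzz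
      rw [zOf_re_im] at h0
      calc ∑ K : Finset (Fin n), (-1:ℝ)^((K ∩ H).card) • (qi ^ K.card * Dminus F h K z)
          = ∑ K : Finset (Fin n),
            JK (fun k => (if k ∈ H then (-1:ℝ) else 1) • qi) K * Dminus F h K z := by
            refine Finset.sum_congr rfl fun K _ => ?_
            rw [JK_sign, smul_mul_assoc]
        _ = 0 := h0
    have h0 := separation' (fun K => qi ^ K.card * Dminus F h K z) hsep K
    rcases mul_eq_zero.mp h0 with hc | hc
    · exact absurd hc (pow_sph_ne_zero qi_mem_Sph K.card)
    · exact hc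
  have hP4 : P0 → ∀ J ∈ Sph, ∀ z ∈ D, ∀ h : Fin n,
      fderiv ℝ (fun w => f (phiJ J w)) z (Pi.single h 1) +
        J * fderiv ℝ (fun w => f (phiJ J w)) z (Pi.single h Complex.I) = 0 := by
    intro hP J hJ z hz h
    rw [key34 hD hC1 hf hJ hz h,
      Finset.sum_congr rfl fun K _ => by rw [hP z hz h K, mul_zero]]
    simp
  have h3P : (∃ J ∈ Sph, ∀ z ∈ D, ∀ h : Fin n,
      fderiv ℝ (fun w => f (phiJ J w)) z (Pi.single h 1) +
        J * fderiv ℝ (fun w => f (phiJ J w)) z (Pi.single h Complex.I) = 0) → P0 := by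
    rintro ⟨J, hJ, h3⟩
    have hyp : ∀ z ∈ D, ∀ h : Fin n,
        ∑ K : Finset (Fin n), J ^ K.card * Dminus F h K z = 0 := by
      intro z hz h
      have h0 := h3 z hz h
      rw [key34 hD hC1 hf hJ hz h] at h0
      rcases smul_eq_zero.mp h0 with hc | hc
      · exact absurd hc (by norm_num)
      · exact hc
    intro z hz h K
    have hsep : ∀ H : Finset (Fin n),
        ∑ K : Finset (Fin n), (-1:ℝ)^((K ∩ H).card) • (J ^ K.card * Dminus F h K z) = 0 :=
      fun H => dminus_sum_conj hD hinv hF hC1 J hyp H z hz h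
    have h0 := separation' (fun K => J ^ K.card * Dminus F h K z) hsep K
    rcases mul_eq_zero.mp h0 with hc | hc
    · exact absurd hc (pow_sph_ne_zero hJ K.card)
    · exact hc
  tfae_have 1 → 2 := fun h => hP2 (h1P h)
  tfae_have 2 → 1 := fun h => hP1 (h2P h)
  tfae_have 1 → 4 := fun h => hP4 (h1P h)
  tfae_have 4 → 3 := fun h4 => ⟨qi, qi_mem_Sph, h4 qi qi_mem_Sph⟩
  tfae_have 3 → 1 := fun h => hP1 (h3P h)
  tfae_finish

end
end
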